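/- Let n ≥ 1 and let w_0 ∈ S_n denote the longest permutation (i ↦ n+1−i). For every polynomial F ∈ ℚ[x_1,…,x_n], the polynomial ∂_{w_0} F is a symmetric polynomial, i.e., it is invariant under the action of every permutation in S_n. -/

import Mathlib

open MvPolynomial
open scoped Classical

/-- The Coxeter length of a permutation of `Fin n`, i.e. its number of inversions. -/
def permLen {n : ℕ} (w : Equiv.Perm (Fin n)) : ℕ :=
  (Finset.univ.filter (fun p : Fin n × Fin n => p.1 < p.2 ∧ w p.2 < w p.1)).card

/-- The adjacent transposition `s_i` exchanging the `i`-th and `(i+1)`-th letters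
(zero-indexed); junk value `1` if out of range. -/
def adjSwap (n : ℕ) (i : ℕ) : Equiv.Perm (Fin n) :=
  if h : i + 1 < n then Equiv.swap ⟨i, Nat.lt_of_succ_lt h⟩ ⟨i + 1, h⟩ else 1

/-- The longest element `w₀` of the symmetric group on `Fin n`, `i ↦ n - 1 - i`
(one-indexed: `i ↦ n + 1 - i`). -/
def w0 (n : ℕ) : Equiv.Perm (Fin n) := Fin.revPerm

/-- The Demazure (divided difference) operator with respect to a pair of variables `i j`:
`f ↦ (f - swap(i,j)·f) / (Xᵢ - Xⱼ)`.  The difference is always divisible by `Xᵢ - Xⱼ`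
(for `i ≠ j`), and the quotient is unique since the polynomial ring is a domain, so the
definition by choice below produces exactly this quotient. -/
noncomputable def demazure {σ : Type} [DecidableEq σ] (i j : σ)
    (f : MvPolynomial σ ℚ) : MvPolynomial σ ℚ :=
  if h : ∃ g, f - rename (Equiv.swap i j) f = (X i - X j) * g then h.choose else 0

/-- The Demazure operator `∂ᵢ` on `ℚ[x₀, …, x_{n-1}]` (zero-indexed). -/
noncomputable def demAt (n : ℕ) (i : ℕ) :
    MvPolynomial (Fin n) ℚ → MvPolynomial (Fin n) ℚ :=
  if h : i + 1 < n then demazure ⟨i, Nat.lt_of_succ_lt h⟩ ⟨i + 1, h⟩ else fun _ => 0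

/-- The composite Demazure operator `∂_{i₁} ∘ ⋯ ∘ ∂_{i_r}` along a word `l = [i₁, …, i_r]`. -/
noncomputable def demWord (n : ℕ) (l : List ℕ) :
    MvPolynomial (Fin n) ℚ → MvPolynomial (Fin n) ℚ :=
  l.foldr (fun i op => demAt n i ∘ op) id

/-- `l = [i₁, …, i_r]` is a reduced word for `w` if all letters are in range,
`s_{i₁} ⋯ s_{i_r} = w`, and `r = ℓ(w)` is the number of inversions of `w`. -/
def IsReducedWord (n : ℕ) (w : Equiv.Perm (Fin n)) (l : List ℕ) : Prop :=
  (∀ i ∈ l, i + 1 < n) ∧ (l.map (adjSwap n)).prod = w ∧ l.length = permLen w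

/-- The Demazure operator `∂_w`, defined along a chosen reduced word of `w`
(the result is independent of this choice). -/
noncomputable def demazureOf (n : ℕ) (w : Equiv.Perm (Fin n)) :
    MvPolynomial (Fin n) ℚ → MvPolynomial (Fin n) ℚ :=
  if h : ∃ l, IsReducedWord n w l then demWord n h.choose else fun _ => 0

/-- The Demazure operator `∂ᵢˣ` acting on the `x`-variables (the left summand) of
`ℚ[x₁, …, xₙ, t₁, …, tₙ]`. -/
noncomputable def demAtX (n : ℕ) (i : ℕ) :
    MvPolynomial (Fin n ⊕ Fin n) ℚ → MvPolynomial (Fin n ⊕ Fin n) ℚ :=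
  if h : i + 1 < n then
    demazure (Sum.inl ⟨i, Nat.lt_of_succ_lt h⟩) (Sum.inl ⟨i + 1, h⟩) else fun _ => 0

/-- Composite of `x`-variable Demazure operators along a word. -/
noncomputable def demWordX (n : ℕ) (l : List ℕ) :
    MvPolynomial (Fin n ⊕ Fin n) ℚ → MvPolynomial (Fin n ⊕ Fin n) ℚ :=
  l.foldr (fun i op => demAtX n i ∘ op) id

/-- The Demazure operator `∂_wˣ` in the `x`-variables, along a chosen reduced word of `w`. -/
noncomputable def demazureOfX (n : ℕ) (w : Equiv.Perm (Fin n)) :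
    MvPolynomial (Fin n ⊕ Fin n) ℚ → MvPolynomial (Fin n ⊕ Fin n) ℚ :=
  if h : ∃ l, IsReducedWord n w l then demWordX n h.choose else fun _ => 0

/-- The top product `∏_{i + j ≤ n} (xᵢ - tⱼ)` (one-indexed), i.e. the double Schubert
polynomial of the longest element. -/
noncomputable def schubProd (n : ℕ) : MvPolynomial (Fin n ⊕ Fin n) ℚ :=
  ∏ p ∈ Finset.univ.filter (fun p : Fin n × Fin n => (p.1 : ℕ) + (p.2 : ℕ) + 2 ≤ n),
    (X (Sum.inl p.1) - X (Sum.inr p.2))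

/-- The double Schubert polynomial `𝔖_w(x, t) = ∂ˣ_{w⁻¹w₀} (∏_{i+j≤n} (xᵢ - tⱼ))`. -/
noncomputable def schubert (n : ℕ) (w : Equiv.Perm (Fin n)) :
    MvPolynomial (Fin n ⊕ Fin n) ℚ :=
  demazureOfX n (w⁻¹ * w0 n) (schubProd n)

set_option linter.unusedSectionVars false

section DemazureAPI

variable {σ : Type} [DecidableEq σ]

lemma sub_rename_swap_dvd (i j : σ) (f : MvPolynomial σ ℚ) :
    (X i - X j : MvPolynomial σ ℚ) ∣ (f - rename (Equiv.swap i j) f) := by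
  induction f using MvPolynomial.induction_on with
  | C a => simp
  | add p q hp hq =>
      have : (p + q) - rename (Equiv.swap i j) (p + q)
          = (p - rename (Equiv.swap i j) p) + (q - rename (Equiv.swap i j) q) := by
        rw [map_add]; ring
      rw [this]; exact dvd_add hp hq
  | mul_X p k hp =>
      have : p * X k - rename (Equiv.swap i j) (p * X k)
          = (p - rename (Equiv.swap i j) p) * X k
            + rename (Equiv.swap i j) p * (X k - X (Equiv.swap i j k)) := by
        rw [map_mul, rename_X]; ring
      rw [this]
      refine dvd_add (Dvd.dvd.mul_right hp _) (Dvd.dvd.mul_left ?_ _)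
      rcases eq_or_ne k i with rfl | hki
      · rw [Equiv.swap_apply_left]
      rcases eq_or_ne k j with rfl | hkj
      · rw [Equiv.swap_apply_right]
        exact ⟨-1, by ring⟩
      · rw [Equiv.swap_apply_of_ne_of_ne hki hkj, sub_self]
        exact dvd_zero _

lemma X_sub_X_ne_zero {i j : σ} (h : i ≠ j) : (X i - X j : MvPolynomial σ ℚ) ≠ 0 := by
  intro he
  exact h (MvPolynomial.X_injective (sub_eq_zero.mp he))

lemma demazure_spec (i j : σ) (f : MvPolynomial σ ℚ) :
    (X i - X j) * demazure i j f = f - rename (Equiv.swap i j) f := by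
  have h : ∃ g, f - rename (Equiv.swap i j) f = (X i - X j) * g := sub_rename_swap_dvd i j f
  rw [demazure, dif_pos h]
  exact h.choose_spec.symm

lemma demazure_unique {i j : σ} (h : i ≠ j) {f g : MvPolynomial σ ℚ}
    (hg : (X i - X j) * g = f - rename (Equiv.swap i j) f) : demazure i j f = g := by
  have := (demazure_spec i j f).trans hg.symm
  exact mul_left_cancel₀ (X_sub_X_ne_zero h) this

lemma rename_swap_swap (i j : σ) (f : MvPolynomial σ ℚ) :
    rename (Equiv.swap i j) (rename (Equiv.swap i j) f) = f := by
  rw [rename_rename]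
  have : ((Equiv.swap i j : Equiv.Perm σ) : σ → σ) ∘ (Equiv.swap i j) = id := by
    funext x; simp [Equiv.swap_apply_self]
  rw [this, rename_id, AlgHom.id_apply]

lemma rename_swap_demazure {i j : σ} (h : i ≠ j) (f : MvPolynomial σ ℚ) :
    rename (Equiv.swap i j) (demazure i j f) = demazure i j f := by
  have hs := demazure_spec i j f
  have h2 := congrArg (rename (Equiv.swap i j)) hs
  rw [map_mul, map_sub, map_sub, rename_X, rename_X, Equiv.swap_apply_left,
    Equiv.swap_apply_right, rename_swap_swap] at h2
  -- h2 : (X j - X i) * rename s (demazure i j f) = rename s f - f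
  have h3 : (X i - X j) * rename (Equiv.swap i j) (demazure i j f)
      = f - rename (Equiv.swap i j) f := by
    have h4 : -((X j - X i) * rename (Equiv.swap i j) (demazure i j f))
        = -(rename (Equiv.swap i j) f - f) := by rw [h2]
    calc (X i - X j) * rename (Equiv.swap i j) (demazure i j f)
        = -((X j - X i) * rename (Equiv.swap i j) (demazure i j f)) := by ring
      _ = -(rename (Equiv.swap i j) f - f) := h4
      _ = f - rename (Equiv.swap i j) f := by ring
  exact mul_left_cancel₀ (X_sub_X_ne_zero h) (h3.trans hs.symm)

end DemazureAPI
section Relations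

variable {σ : Type} [DecidableEq σ]

lemma swap_braid {i j k : σ} (hij : i ≠ j) (hjk : j ≠ k) (hik : i ≠ k) :
    (Equiv.swap i j : Equiv.Perm σ) * Equiv.swap j k * Equiv.swap i j
      = Equiv.swap j k * Equiv.swap i j * Equiv.swap j k := by
  have L : (Equiv.swap j i : Equiv.Perm σ) * Equiv.swap k j * Equiv.swap j i
      = Equiv.swap i k := Equiv.swap_mul_swap_mul_swap hjk.symm hik.symm
  have R : (Equiv.swap j k : Equiv.Perm σ) * Equiv.swap i j * Equiv.swap j k
      = Equiv.swap k i := Equiv.swap_mul_swap_mul_swap hij hik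
  rw [Equiv.swap_comm j i, Equiv.swap_comm k j] at L
  rw [L, R, Equiv.swap_comm]

/-- `rename` along a swap, as a plain function. -/
noncomputable def rsw (u v : σ) : MvPolynomial σ ℚ → MvPolynomial σ ℚ :=
  fun p => rename (Equiv.swap u v) p

lemma rsw_mul (u v : σ) (p q : MvPolynomial σ ℚ) :
    rsw u v (p * q) = rsw u v p * rsw u v q := map_mul (rename (Equiv.swap u v)) p q

lemma rsw_sub (u v : σ) (p q : MvPolynomial σ ℚ) :
    rsw u v (p - q) = rsw u v p - rsw u v q := map_sub (rename (Equiv.swap u v)) p q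

lemma rsw_X (u v a : σ) : rsw u v (X a) = X (Equiv.swap u v a) := rename_X _ a

lemma rsw_rsw (u v : σ) (p : MvPolynomial σ ℚ) : rsw u v (rsw u v p) = p :=
  rename_swap_swap u v p

lemma demazure_spec' (i j : σ) (f : MvPolynomial σ ℚ) :
    (X i - X j) * demazure i j f = f - rsw i j f := demazure_spec i j f

lemma rsw_demazure {i j : σ} (h : i ≠ j) (f : MvPolynomial σ ℚ) :
    rsw i j (demazure i j f) = demazure i j f := rename_swap_demazure h f

lemma demazure_comm {i1 i2 j1 j2 : σ} (h12 : i1 ≠ i2) (h34 : j1 ≠ j2)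
    (d11 : i1 ≠ j1) (d12 : i1 ≠ j2) (d21 : i2 ≠ j1) (d22 : i2 ≠ j2)
    (f : MvPolynomial σ ℚ) :
    demazure i1 i2 (demazure j1 j2 f) = demazure j1 j2 (demazure i1 i2 f) := by
  have e1 : Equiv.swap i1 i2 j1 = j1 := Equiv.swap_apply_of_ne_of_ne d11.symm d21.symm
  have e2 : Equiv.swap i1 i2 j2 = j2 := Equiv.swap_apply_of_ne_of_ne d12.symm d22.symm
  have e3 : Equiv.swap j1 j2 i1 = i1 := Equiv.swap_apply_of_ne_of_ne d11 d12
  have e4 : Equiv.swap j1 j2 i2 = i2 := Equiv.swap_apply_of_ne_of_ne d21 d22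
  have hST : ∀ p : MvPolynomial σ ℚ, rsw i1 i2 (rsw j1 j2 p) = rsw j1 j2 (rsw i1 i2 p) := by
    intro p
    show rename _ (rename _ p) = rename _ (rename _ p)
    rw [rename_rename, rename_rename]
    have hfun : (⇑(Equiv.swap i1 i2) ∘ ⇑(Equiv.swap j1 j2))
        = (⇑(Equiv.swap j1 j2) ∘ ⇑(Equiv.swap i1 i2)) := by
      funext x
      simp only [Function.comp_apply, Equiv.swap_apply_def]
      split_ifs <;> simp_all <;> tauto
    rw [hfun]
  have E1 : (X j1 - X j2) * demazure j1 j2 f = f - rsw j1 j2 f := demazure_spec' _ _ f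
  have E2 : (X i1 - X i2) * demazure i1 i2 (demazure j1 j2 f)
      = demazure j1 j2 f - rsw i1 i2 (demazure j1 j2 f) := demazure_spec' _ _ _
  have E1' : (X i1 - X i2) * demazure i1 i2 f = f - rsw i1 i2 f := demazure_spec' _ _ f
  have E2' : (X j1 - X j2) * demazure j1 j2 (demazure i1 i2 f)
      = demazure i1 i2 f - rsw j1 j2 (demazure i1 i2 f) := demazure_spec' _ _ _
  have SE1 : (X j1 - X j2) * rsw i1 i2 (demazure j1 j2 f)
      = rsw i1 i2 f - rsw i1 i2 (rsw j1 j2 f) := by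
    have h := congrArg (rsw i1 i2) E1
    simp only [rsw_mul, rsw_sub, rsw_X, e1, e2] at h
    exact h
  have TE1' : (X i1 - X i2) * rsw j1 j2 (demazure i1 i2 f)
      = rsw j1 j2 f - rsw j1 j2 (rsw i1 i2 f) := by
    have h := congrArg (rsw j1 j2) E1'
    simp only [rsw_mul, rsw_sub, rsw_X, e3, e4] at h
    exact h
  have key : ((X i1 - X i2) * (X j1 - X j2)) * demazure i1 i2 (demazure j1 j2 f)
      = ((X i1 - X i2) * (X j1 - X j2)) * demazure j1 j2 (demazure i1 i2 f) := by
    have hc := hST f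
    linear_combination (X j1 - X j2) * E2 + E1 - SE1 - (X i1 - X i2) * E2' - E1' + TE1' + hc
  exact mul_left_cancel₀
    (mul_ne_zero (X_sub_X_ne_zero h12) (X_sub_X_ne_zero h34)) key

lemma demazure_braid {i j k : σ} (hij : i ≠ j) (hjk : j ≠ k) (hik : i ≠ k)
    (f : MvPolynomial σ ℚ) :
    demazure i j (demazure j k (demazure i j f))
      = demazure j k (demazure i j (demazure j k f)) := by
  have si : Equiv.swap i j i = j := Equiv.swap_apply_left i j
  have sj : Equiv.swap i j j = i := Equiv.swap_apply_right i j
  have sk : Equiv.swap i j k = k := Equiv.swap_apply_of_ne_of_ne hik.symm hjk.symm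
  have tj : Equiv.swap j k j = k := Equiv.swap_apply_left j k
  have tk : Equiv.swap j k k = j := Equiv.swap_apply_right j k
  have ti : Equiv.swap j k i = i := Equiv.swap_apply_of_ne_of_ne hij hik
  have hsts : ∀ p : MvPolynomial σ ℚ,
      rsw i j (rsw j k (rsw i j p)) = rsw j k (rsw i j (rsw j k p)) := by
    intro p
    show rename _ (rename _ (rename _ p)) = rename _ (rename _ (rename _ p))
    rw [rename_rename, rename_rename, rename_rename, rename_rename]
    have hb := swap_braid hij hjk hik
    have hfun : ((⇑(Equiv.swap i j) ∘ ⇑(Equiv.swap j k)) ∘ ⇑(Equiv.swap i j))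
        = ((⇑(Equiv.swap j k) ∘ ⇑(Equiv.swap i j)) ∘ ⇑(Equiv.swap j k)) := by
      funext x
      have hx := Equiv.ext_iff.mp hb x
      simpa [Equiv.Perm.mul_apply, Function.comp] using hx
    rw [hfun]
  set g1 := demazure i j f with hg1
  set g2 := demazure j k g1 with hg2
  set g3 := demazure i j g2 with hg3
  have E1 : (X i - X j) * g1 = f - rsw i j f := demazure_spec' _ _ _
  have E2 : (X j - X k) * g2 = g1 - rsw j k g1 := demazure_spec' _ _ _
  have E3 : (X i - X j) * g3 = g2 - rsw i j g2 := demazure_spec' _ _ _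
  have TE1 : (X i - X k) * rsw j k g1 = rsw j k f - rsw j k (rsw i j f) := by
    have h := congrArg (rsw j k) E1
    simp only [rsw_mul, rsw_sub, rsw_X, ti, tj] at h
    exact h
  have D2 : ((X i - X j) * (X j - X k) * (X i - X k)) * g2
      = (X i - X k) * (f - rsw i j f) - (X i - X j) * (rsw j k f - rsw j k (rsw i j f)) := by
    linear_combination ((X i - X j) * (X i - X k)) * E2 + (X i - X k) * E1 - (X i - X j) * TE1
  have SD2 : (-((X i - X j) * (X i - X k) * (X j - X k))) * rsw i j g2
      = (X j - X k) * (rsw i j f - f)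
        - (X j - X i) * (rsw i j (rsw j k f) - rsw i j (rsw j k (rsw i j f))) := by
    have h := congrArg (rsw i j) D2
    simp only [rsw_mul, rsw_sub, rsw_X, si, sj, sk, rsw_rsw] at h
    linear_combination h
  have keyL : ((X i - X j)) * (((X i - X j) * (X j - X k) * (X i - X k)) * g3)
      = (X i - X j) * (f - rsw i j f - rsw j k f + rsw j k (rsw i j f)
          + rsw i j (rsw j k f) - rsw i j (rsw j k (rsw i j f))) := by
    linear_combination ((X i - X j) * (X j - X k) * (X i - X k)) * E3 + D2 + SD2
  have L : ((X i - X j) * (X j - X k) * (X i - X k)) * g3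
      = f - rsw i j f - rsw j k f + rsw j k (rsw i j f)
          + rsw i j (rsw j k f) - rsw i j (rsw j k (rsw i j f)) :=
    mul_left_cancel₀ (X_sub_X_ne_zero hij) keyL
  set k1 := demazure j k f with hk1
  set k2 := demazure i j k1 with hk2
  set k3 := demazure j k k2 with hk3
  have F1 : (X j - X k) * k1 = f - rsw j k f := demazure_spec' _ _ _
  have F2 : (X i - X j) * k2 = k1 - rsw i j k1 := demazure_spec' _ _ _
  have F3 : (X j - X k) * k3 = k2 - rsw j k k2 := demazure_spec' _ _ _
  have SF1 : (X i - X k) * rsw i j k1 = rsw i j f - rsw i j (rsw j k f) := by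
    have h := congrArg (rsw i j) F1
    simp only [rsw_mul, rsw_sub, rsw_X, si, sj, sk] at h
    exact h
  have D2' : ((X i - X j) * (X j - X k) * (X i - X k)) * k2
      = (X i - X k) * (f - rsw j k f) - (X j - X k) * (rsw i j f - rsw i j (rsw j k f)) := by
    linear_combination ((X j - X k) * (X i - X k)) * F2 + (X i - X k) * F1 - (X j - X k) * SF1
  have TD2' : (-((X i - X k) * (X j - X k) * (X i - X j))) * rsw j k k2
      = (X i - X j) * (rsw j k f - f)
        - (X k - X j) * (rsw j k (rsw i j f) - rsw j k (rsw i j (rsw j k f))) := by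
    have h := congrArg (rsw j k) D2'
    simp only [rsw_mul, rsw_sub, rsw_X, ti, tj, tk, rsw_rsw] at h
    linear_combination h
  have keyR : ((X j - X k)) * (((X i - X j) * (X j - X k) * (X i - X k)) * k3)
      = (X j - X k) * (f - rsw j k f - rsw i j f + rsw i j (rsw j k f)
          + rsw j k (rsw i j f) - rsw j k (rsw i j (rsw j k f))) := by
    linear_combination ((X i - X j) * (X j - X k) * (X i - X k)) * F3 + D2' + TD2'
  have R : ((X i - X j) * (X j - X k) * (X i - X k)) * k3
      = f - rsw j k f - rsw i j f + rsw i j (rsw j k f)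
          + rsw j k (rsw i j f) - rsw j k (rsw i j (rsw j k f)) :=
    mul_left_cancel₀ (X_sub_X_ne_zero hjk) keyR
  have habc : ((X i - X j) * (X j - X k) * (X i - X k) : MvPolynomial σ ℚ) ≠ 0 :=
    mul_ne_zero (mul_ne_zero (X_sub_X_ne_zero hij) (X_sub_X_ne_zero hjk)) (X_sub_X_ne_zero hik)
  apply mul_left_cancel₀ habc
  rw [L, R, hsts f]
  ring

end Relations
section Combinatorics

variable {n : ℕ}

lemma adjSwap_eq (i : ℕ) (h : i + 1 < n) :
    adjSwap n i = Equiv.swap ⟨i, Nat.lt_of_succ_lt h⟩ ⟨i + 1, h⟩ := by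
  rw [adjSwap, dif_pos h]

lemma adjSwap_sq (i : ℕ) : adjSwap n i * adjSwap n i = 1 := by
  rw [adjSwap]; split_ifs
  · exact Equiv.swap_mul_self _ _
  · exact mul_one 1

lemma adjSwap_val {i : ℕ} (h : i + 1 < n) (x : Fin n) :
    ((adjSwap n i x : Fin n) : ℕ)
      = if (x : ℕ) = i then i + 1 else if (x : ℕ) = i + 1 then i else x := by
  rw [adjSwap_eq i h]
  rcases eq_or_ne x ⟨i, Nat.lt_of_succ_lt h⟩ with rfl | h1
  · rw [Equiv.swap_apply_left]
    show (i + 1 : ℕ) = if (i : ℕ) = i then i + 1 else if (i : ℕ) = i + 1 then i else i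
    split_ifs <;> omega
  · rcases eq_or_ne x ⟨i + 1, h⟩ with rfl | h2
    · rw [Equiv.swap_apply_right]
      show (i : ℕ) = if (i + 1 : ℕ) = i then i + 1 else if (i + 1 : ℕ) = i + 1 then i else i + 1
      split_ifs <;> omega
    · rw [Equiv.swap_apply_of_ne_of_ne h1 h2]
      have h1' : ¬ ((x : ℕ) = i) := fun hh => h1 (Fin.ext hh)
      have h2' : ¬ ((x : ℕ) = i + 1) := fun hh => h2 (Fin.ext hh)
      rw [if_neg h1', if_neg h2']

lemma permLen_ascent {i : ℕ} (h : i + 1 < n) (w : Equiv.Perm (Fin n))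
    (hw : w⁻¹ ⟨i, Nat.lt_of_succ_lt h⟩ < w⁻¹ ⟨i + 1, h⟩) :
    permLen (adjSwap n i * w) = permLen w + 1 := by
  set fi : Fin n := ⟨i, Nat.lt_of_succ_lt h⟩ with hfi
  set fi1 : Fin n := ⟨i + 1, h⟩ with hfi1
  set p0 : Fin n × Fin n := (w⁻¹ fi, w⁻¹ fi1) with hp0
  have hset : (Finset.univ.filter
        (fun p : Fin n × Fin n => p.1 < p.2 ∧ (adjSwap n i * w) p.2 < (adjSwap n i * w) p.1))
      = insert p0 (Finset.univ.filter
        (fun p : Fin n × Fin n => p.1 < p.2 ∧ w p.2 < w p.1)) := by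
    ext p
    simp only [Finset.mem_filter, Finset.mem_insert, Finset.mem_univ, true_and]
    simp only [Equiv.Perm.mul_apply]
    have hsa := adjSwap_val h (w p.1)
    have hsb := adjSwap_val h (w p.2)
    have hgen : ∀ (x a : Fin n), ((w x : Fin n) : ℕ) = (a : ℕ) ↔ ((x : Fin n) : ℕ) = ((w⁻¹ a : Fin n) : ℕ) := by
      intro x a
      constructor
      · intro hh
        have h1 : w x = a := Fin.ext hh
        rw [← h1, Equiv.Perm.inv_def, Equiv.symm_apply_apply]
      · intro hh
        have h1 : x = w⁻¹ a := Fin.ext hh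
        rw [h1, Equiv.Perm.inv_def, Equiv.apply_symm_apply]
    have hA1 := hgen p.1 fi
    have hA2 := hgen p.1 fi1
    have hB1 := hgen p.2 fi
    have hB2 := hgen p.2 fi1
    have hfiv : ((fi : Fin n) : ℕ) = i := rfl
    have hfi1v : ((fi1 : Fin n) : ℕ) = i + 1 := rfl
    rw [hfiv] at hA1 hB1
    rw [hfi1v] at hA2 hB2
    have hab : ((w p.1 : Fin n) : ℕ) = ((w p.2 : Fin n) : ℕ) ↔ ((p.1 : Fin n) : ℕ) = ((p.2 : Fin n) : ℕ) := by
      rw [← Fin.ext_iff, ← Fin.ext_iff, w.injective.eq_iff]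
    have hP : p = p0 ↔ (((p.1 : Fin n) : ℕ) = ((w⁻¹ fi : Fin n) : ℕ)
        ∧ ((p.2 : Fin n) : ℕ) = ((w⁻¹ fi1 : Fin n) : ℕ)) := by
      rw [hp0, Prod.ext_iff, Fin.ext_iff, Fin.ext_iff]
    have hw' : ((w⁻¹ fi : Fin n) : ℕ) < ((w⁻¹ fi1 : Fin n) : ℕ) := hw
    rw [hP]
    simp only [Fin.lt_def, hsa, hsb]
    split_ifs <;> omega
  have hnot : p0 ∉ (Finset.univ.filter
      (fun p : Fin n × Fin n => p.1 < p.2 ∧ w p.2 < w p.1)) := by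
    simp only [Finset.mem_filter, Finset.mem_univ, true_and, hp0, not_and]
    intro _
    rw [Equiv.Perm.inv_def, Equiv.apply_symm_apply, Equiv.apply_symm_apply]
    simp only [Fin.lt_def, hfi, hfi1]
    omega
  rw [permLen, hset, Finset.card_insert_of_notMem hnot, permLen]

lemma permLen_descent {i : ℕ} (h : i + 1 < n) (w : Equiv.Perm (Fin n))
    (hw : w⁻¹ ⟨i + 1, h⟩ < w⁻¹ ⟨i, Nat.lt_of_succ_lt h⟩) :
    permLen (adjSwap n i * w) + 1 = permLen w := by
  have hw2 : (adjSwap n i * w)⁻¹ (⟨i, Nat.lt_of_succ_lt h⟩ : Fin n)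
      < (adjSwap n i * w)⁻¹ ⟨i + 1, h⟩ := by
    have hinv : (adjSwap n i * w)⁻¹ = w⁻¹ * adjSwap n i := by
      rw [mul_inv_rev]
      congr 1
      rw [adjSwap_eq i h, Equiv.swap_inv]
    rw [hinv]
    simp only [Equiv.Perm.mul_apply, adjSwap_eq i h, Equiv.swap_apply_left,
      Equiv.swap_apply_right]
    exact hw
  have key := permLen_ascent h (adjSwap n i * w) hw2
  rw [← mul_assoc, adjSwap_sq, one_mul] at key
  exact key.symm

lemma adjSwap_ne_fixed {i : ℕ} (h : i + 1 < n) (w : Equiv.Perm (Fin n)) :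
    w⁻¹ (⟨i, Nat.lt_of_succ_lt h⟩ : Fin n) ≠ w⁻¹ ⟨i + 1, h⟩ := by
  intro he
  have := w⁻¹.injective he
  simp [Fin.ext_iff] at this

lemma permLen_one : permLen (1 : Equiv.Perm (Fin n)) = 0 := by
  rw [permLen, Finset.card_eq_zero, Finset.filter_eq_empty_iff]
  intro p _
  simp only [Equiv.Perm.one_apply]
  intro ⟨h1, h2⟩
  exact absurd h2 (not_lt.mpr h1.le)

lemma strictMono_perm_eq_one (w : Equiv.Perm (Fin n)) (hm : StrictMono ⇑w) : w = 1 := by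
  have hsub : (StrictMono.orderIsoOfSurjective ⇑w hm w.surjective)
      = OrderIso.refl (Fin n) := Subsingleton.elim _ _
  apply Equiv.ext
  intro x
  have hx : (StrictMono.orderIsoOfSurjective ⇑w hm w.surjective) x = x := by rw [hsub]; rfl
  have hx2 : (StrictMono.orderIsoOfSurjective ⇑w hm w.surjective) x = w x := rfl
  rw [Equiv.Perm.one_apply, ← hx2, hx]

lemma permLen_eq_zero {w : Equiv.Perm (Fin n)} (hw : permLen w = 0) : w = 1 := by
  have hmono : StrictMono ⇑w := by
    intro x y hxy
    rcases lt_trichotomy (w x) (w y) with hlt | heq | hgt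
    · exact hlt
    · exact absurd (w.injective heq) (ne_of_lt hxy)
    · exfalso
      have hm : (x, y) ∈ Finset.univ.filter
          (fun p : Fin n × Fin n => p.1 < p.2 ∧ w p.2 < w p.1) := by
        simp [hxy, hgt]
      rw [permLen, Finset.card_eq_zero] at hw
      rw [hw] at hm
      exact absurd hm (Finset.notMem_empty _)
  exact strictMono_perm_eq_one w hmono

lemma exists_descent {w : Equiv.Perm (Fin n)} (hw : w ≠ 1) :
    ∃ i : ℕ, ∃ h : i + 1 < n, w⁻¹ ⟨i + 1, h⟩ < w⁻¹ ⟨i, Nat.lt_of_succ_lt h⟩ := by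
  by_contra hc
  push_neg at hc
  apply hw
  have hasc : ∀ (i : ℕ) (h : i + 1 < n),
      w⁻¹ (⟨i, Nat.lt_of_succ_lt h⟩ : Fin n) < w⁻¹ ⟨i + 1, h⟩ := by
    intro i h
    rcases lt_trichotomy (w⁻¹ (⟨i, Nat.lt_of_succ_lt h⟩ : Fin n)) (w⁻¹ ⟨i + 1, h⟩) with
      hlt | heq | hgt
    · exact hlt
    · exact absurd heq (adjSwap_ne_fixed h w)
    · exact absurd hgt (not_lt.mpr (hc i h))
  have hmono : StrictMono ⇑w⁻¹ := by
    have step : ∀ x y : Fin n, (y : ℕ) = (x : ℕ) + 1 → w⁻¹ x < w⁻¹ y := by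
      intro x y hxy1
      have hx : (x : ℕ) + 1 < n := by have := y.isLt; omega
      have hxe : x = (⟨(x : ℕ), Nat.lt_of_succ_lt hx⟩ : Fin n) := Fin.ext rfl
      have hye : y = (⟨(x : ℕ) + 1, hx⟩ : Fin n) := Fin.ext (by show (y : ℕ) = (x : ℕ) + 1; omega)
      rw [hxe, hye]
      exact hasc (x : ℕ) hx
    have key : ∀ d : ℕ, ∀ x y : Fin n, (y : ℕ) = (x : ℕ) + d + 1 → w⁻¹ x < w⁻¹ y := by
      intro d
      induction d with
      | zero => intro x y hxy1; exact step x y (by omega)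
      | succ d ih =>
          intro x y hxy1
          have hz : (x : ℕ) + d + 1 < n := by have := y.isLt; omega
          set z : Fin n := ⟨(x : ℕ) + d + 1, hz⟩ with hzdef
          exact (ih x z rfl).trans (step z y (by simp [hzdef]; omega))
    intro x y hxy
    have hd : (y : ℕ) = (x : ℕ) + ((y : ℕ) - (x : ℕ) - 1) + 1 := by
      have := hxy; rw [Fin.lt_def] at this; omega
    exact key _ x y hd
  have : w⁻¹ = 1 := strictMono_perm_eq_one w⁻¹ hmono
  rw [← inv_inv w, this, inv_one]

end Combinatorics
section ReducedWords

variable {n : ℕ}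

lemma adjSwap_inv (i : ℕ) : (adjSwap n i)⁻¹ = adjSwap n i :=
  inv_eq_of_mul_eq_one_right (adjSwap_sq i)

lemma adjSwap_mul_inv (i : ℕ) (w : Equiv.Perm (Fin n)) :
    (adjSwap n i * w)⁻¹ = w⁻¹ * adjSwap n i := by
  rw [mul_inv_rev, adjSwap_inv]

lemma adjSwap_collapse (i : ℕ) (w : Equiv.Perm (Fin n)) :
    adjSwap n i * (adjSwap n i * w) = w := by
  rw [← mul_assoc, adjSwap_sq, one_mul]

lemma adjSwap_apply_lo {i : ℕ} (h : i + 1 < n) :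
    adjSwap n i ⟨i, Nat.lt_of_succ_lt h⟩ = ⟨i + 1, h⟩ := by
  rw [adjSwap_eq i h, Equiv.swap_apply_left]

lemma adjSwap_apply_hi {i : ℕ} (h : i + 1 < n) :
    adjSwap n i ⟨i + 1, h⟩ = ⟨i, Nat.lt_of_succ_lt h⟩ := by
  rw [adjSwap_eq i h, Equiv.swap_apply_right]

lemma adjSwap_apply_other {i : ℕ} (h : i + 1 < n) (x : Fin n)
    (h1 : (x : ℕ) ≠ i) (h2 : (x : ℕ) ≠ i + 1) : adjSwap n i x = x := by
  rw [adjSwap_eq i h]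
  exact Equiv.swap_apply_of_ne_of_ne (fun hh => h1 (by rw [hh]))
    (fun hh => h2 (by rw [hh]))

lemma adjSwap_apply_other' {i : ℕ} (h : i + 1 < n) (a : ℕ) (ha : a < n)
    (h1 : a ≠ i) (h2 : a ≠ i + 1) : adjSwap n i ⟨a, ha⟩ = ⟨a, ha⟩ :=
  adjSwap_apply_other h _ h1 h2

lemma descent_order {i : ℕ} (h : i + 1 < n) (w : Equiv.Perm (Fin n))
    (hdl : permLen (adjSwap n i * w) + 1 = permLen w) :
    w⁻¹ ⟨i + 1, h⟩ < w⁻¹ ⟨i, Nat.lt_of_succ_lt h⟩ := by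
  rcases lt_or_gt_of_ne (adjSwap_ne_fixed h w) with hlt | hgt
  · have := permLen_ascent h w hlt
    omega
  · exact hgt

lemma permLen_mul_le {i : ℕ} (w : Equiv.Perm (Fin n)) :
    permLen (adjSwap n i * w) ≤ permLen w + 1 := by
  by_cases h : i + 1 < n
  · rcases lt_or_gt_of_ne (adjSwap_ne_fixed h w) with hlt | hgt
    · rw [permLen_ascent h w hlt]
    · have := permLen_descent h w hgt
      omega
  · rw [adjSwap, dif_neg h, one_mul]
    omega

lemma permLen_prod_le (l : List ℕ) :
    permLen ((l.map (adjSwap n)).prod) ≤ l.length := by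
  induction l with
  | nil => simp [permLen_one]
  | cons i l ih =>
      rw [List.map_cons, List.prod_cons, List.length_cons]
      calc permLen (adjSwap n i * (l.map (adjSwap n)).prod)
          ≤ permLen ((l.map (adjSwap n)).prod) + 1 := permLen_mul_le _
        _ ≤ l.length + 1 := by omega

lemma exists_reduced_word (w : Equiv.Perm (Fin n)) : ∃ l, IsReducedWord n w l := by
  suffices H : ∀ k, ∀ w : Equiv.Perm (Fin n), permLen w = k → ∃ l, IsReducedWord n w l from
    H (permLen w) w rfl
  intro k
  induction k with
  | zero =>
      intro w hw
      have : w = 1 := permLen_eq_zero hw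
      subst this
      exact ⟨[], fun i hi => absurd hi List.not_mem_nil, by simp, by simp [hw]⟩
  | succ k ih =>
      intro w hw
      have hne : w ≠ 1 := by
        intro he; rw [he, permLen_one] at hw; omega
      obtain ⟨i, h, hdesc⟩ := exists_descent hne
      have hd := permLen_descent h w hdesc
      obtain ⟨l, hl⟩ := ih (adjSwap n i * w) (by omega)
      refine ⟨i :: l, ?_, ?_, ?_⟩
      · intro x hx
        rcases List.mem_cons.mp hx with rfl | hx
        · exact h
        · exact hl.1 x hx
      · rw [List.map_cons, List.prod_cons, hl.2.1, adjSwap_collapse]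
      · rw [List.length_cons, hl.2.2]
        omega

lemma reduced_cons_of {i : ℕ} (h : i + 1 < n) {u : Equiv.Perm (Fin n)} {t : List ℕ}
    (ht : IsReducedWord n u t)
    (hp : permLen (adjSwap n i * u) = permLen u + 1) :
    IsReducedWord n (adjSwap n i * u) (i :: t) := by
  refine ⟨?_, ?_, ?_⟩
  · intro x hx
    rcases List.mem_cons.mp hx with rfl | hx
    · exact h
    · exact ht.1 x hx
  · rw [List.map_cons, List.prod_cons, ht.2.1]
  · rw [List.length_cons, ht.2.2, hp]

lemma cons_reduced {i : ℕ} {w : Equiv.Perm (Fin n)} {l' : List ℕ}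
    (hl : IsReducedWord n w (i :: l')) :
    (i + 1 < n) ∧ IsReducedWord n (adjSwap n i * w) l'
      ∧ permLen (adjSwap n i * w) + 1 = permLen w := by
  have hi : i + 1 < n := hl.1 i List.mem_cons_self
  have hrange : ∀ x ∈ l', x + 1 < n := fun x hx => hl.1 x (List.mem_cons_of_mem i hx)
  have hprod : adjSwap n i * (l'.map (adjSwap n)).prod = w := by
    have := hl.2.1
    rwa [List.map_cons, List.prod_cons] at this
  have hlen : l'.length + 1 = permLen w := by
    have := hl.2.2
    rwa [List.length_cons] at this
  have hP : (l'.map (adjSwap n)).prod = adjSwap n i * w := by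
    rw [← hprod, adjSwap_collapse]
  have hle : permLen (adjSwap n i * w) ≤ l'.length := by
    rw [← hP]; exact permLen_prod_le l'
  -- trichotomy
  have hpm : permLen (adjSwap n i * w) + 1 = permLen w := by
    rcases lt_or_gt_of_ne (adjSwap_ne_fixed hi w) with hlt | hgt
    · have := permLen_ascent hi w hlt
      omega
    · exact permLen_descent hi w hgt
  exact ⟨hi, ⟨hrange, hP, by omega⟩, hpm⟩

end ReducedWords
section Operators

variable {n : ℕ}

lemma demAt_eq {i : ℕ} (h : i + 1 < n) :
    demAt n i = demazure (⟨i, Nat.lt_of_succ_lt h⟩ : Fin n) ⟨i + 1, h⟩ := by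
  rw [demAt, dif_pos h]

lemma demWord_cons (i : ℕ) (l : List ℕ) :
    demWord n (i :: l) = demAt n i ∘ demWord n l := rfl

lemma fin_mk_ne {a b : ℕ} (ha : a < n) (hb : b < n) (hab : a ≠ b) :
    (⟨a, ha⟩ : Fin n) ≠ ⟨b, hb⟩ := by
  intro he
  exact hab (congrArg Fin.val he)

lemma adjSwap_comm {i j : ℕ} (hi : i + 1 < n) (hj : j + 1 < n)
    (hd : i + 2 ≤ j ∨ j + 2 ≤ i) :
    adjSwap n i * adjSwap n j = adjSwap n j * adjSwap n i := by
  apply Equiv.ext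
  intro x
  apply Fin.ext
  rw [Equiv.Perm.mul_apply, Equiv.Perm.mul_apply,
    adjSwap_val hi (adjSwap n j x), adjSwap_val hj (adjSwap n i x),
    adjSwap_val hj x, adjSwap_val hi x]
  split_ifs <;> omega

lemma adjSwap_braid {i : ℕ} (hi : i + 1 < n) (hj : i + 2 < n) :
    adjSwap n i * adjSwap n (i + 1) * adjSwap n i
      = adjSwap n (i + 1) * adjSwap n i * adjSwap n (i + 1) := by
  have h1 : (⟨i, by omega⟩ : Fin n) ≠ ⟨i + 1, by omega⟩ := fin_mk_ne _ _ (by omega)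
  have h2 : (⟨i + 1, by omega⟩ : Fin n) ≠ ⟨i + 2, by omega⟩ := fin_mk_ne _ _ (by omega)
  have h3 : (⟨i, by omega⟩ : Fin n) ≠ ⟨i + 2, by omega⟩ := fin_mk_ne _ _ (by omega)
  rw [adjSwap_eq i hi, adjSwap_eq (i + 1) hj]
  exact swap_braid h1 h2 h3

lemma demAt_comm {i j : ℕ} (hi : i + 1 < n) (hj : j + 1 < n)
    (hd : i + 2 ≤ j ∨ j + 2 ≤ i) (f : MvPolynomial (Fin n) ℚ) :
    demAt n i (demAt n j f) = demAt n j (demAt n i f) := by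
  rw [demAt_eq hi, demAt_eq hj]
  exact demazure_comm (fin_mk_ne _ _ (by omega)) (fin_mk_ne _ _ (by omega))
    (fin_mk_ne _ _ (by omega)) (fin_mk_ne _ _ (by omega))
    (fin_mk_ne _ _ (by omega)) (fin_mk_ne _ _ (by omega)) f

lemma demAt_braid {i : ℕ} (hi : i + 1 < n) (hj : i + 2 < n) (f : MvPolynomial (Fin n) ℚ) :
    demAt n i (demAt n (i + 1) (demAt n i f))
      = demAt n (i + 1) (demAt n i (demAt n (i + 1) f)) := by
  rw [demAt_eq hi, demAt_eq hj]
  have hb := demazure_braid (i := (⟨i, by omega⟩ : Fin n)) (j := ⟨i + 1, by omega⟩)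
    (k := ⟨i + 2, by omega⟩) (fin_mk_ne _ _ (by omega)) (fin_mk_ne _ _ (by omega))
    (fin_mk_ne _ _ (by omega)) f
  exact hb

end Operators
section WordIndependence

variable {n : ℕ}

lemma helper_far {i j : ℕ} (hi : i + 1 < n) (hj : j + 1 < n) (hd : i + 2 ≤ j ∨ j + 2 ≤ i)
    {k : ℕ}
    (IH : ∀ k' : ℕ, k' < k → ∀ w : Equiv.Perm (Fin n), permLen w = k' →
      ∀ l m, IsReducedWord n w l → IsReducedWord n w m → demWord n l = demWord n m)
    (w : Equiv.Perm (Fin n)) (hw : permLen w = k) {l' m' : List ℕ}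
    (hl' : IsReducedWord n (adjSwap n i * w) l') (hdl : permLen (adjSwap n i * w) + 1 = k)
    (hm' : IsReducedWord n (adjSwap n j * w) m') (hdm : permLen (adjSwap n j * w) + 1 = k) :
    demWord n (i :: l') = demWord n (j :: m') := by
  have hdl' : permLen (adjSwap n i * w) + 1 = permLen w := by omega
  have hdm' : permLen (adjSwap n j * w) + 1 = permLen w := by omega
  have ai := descent_order hi w hdl'
  have aj := descent_order hj w hdm'
  set vi := adjSwap n i * w with hvidef
  set vj := adjSwap n j * w with hvjdef
  have dvj : vi⁻¹ ⟨j + 1, hj⟩ < vi⁻¹ ⟨j, Nat.lt_of_succ_lt hj⟩ := by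
    rw [hvidef, adjSwap_mul_inv]
    simp only [Equiv.Perm.mul_apply]
    have e1 : adjSwap n i (⟨j + 1, hj⟩ : Fin n) = ⟨j + 1, hj⟩ :=
      adjSwap_apply_other' hi (j + 1) hj (by omega) (by omega)
    have e2 : adjSwap n i (⟨j, Nat.lt_of_succ_lt hj⟩ : Fin n) = ⟨j, Nat.lt_of_succ_lt hj⟩ :=
      adjSwap_apply_other' hi j (Nat.lt_of_succ_lt hj) (by omega) (by omega)
    rw [e1, e2]
    exact aj
  have hu := permLen_descent hj vi dvj
  set u := adjSwap n j * vi with hudef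
  obtain ⟨t, ht⟩ := exists_reduced_word u
  have hjred : IsReducedWord n vi (j :: t) := by
    have hcol : adjSwap n j * u = vi := adjSwap_collapse _ _
    have := reduced_cons_of hj ht (by rw [hcol]; omega)
    rwa [hcol] at this
  have e1 : demWord n l' = demWord n (j :: t) :=
    IH (k - 1) (by omega) vi (by omega) l' (j :: t) hl' hjred
  have dvi : vj⁻¹ ⟨i + 1, hi⟩ < vj⁻¹ ⟨i, Nat.lt_of_succ_lt hi⟩ := by
    rw [hvjdef, adjSwap_mul_inv]
    simp only [Equiv.Perm.mul_apply]
    have e1' : adjSwap n j (⟨i + 1, hi⟩ : Fin n) = ⟨i + 1, hi⟩ :=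
      adjSwap_apply_other' hj (i + 1) hi (by omega) (by omega)
    have e2' : adjSwap n j (⟨i, Nat.lt_of_succ_lt hi⟩ : Fin n) = ⟨i, Nat.lt_of_succ_lt hi⟩ :=
      adjSwap_apply_other' hj i (Nat.lt_of_succ_lt hi) (by omega) (by omega)
    rw [e1', e2']
    exact ai
  have hu' := permLen_descent hi vj dvi
  have huu : adjSwap n i * vj = u := by
    rw [hudef, hvidef, hvjdef, ← mul_assoc, ← mul_assoc, adjSwap_comm hi hj hd]
  rw [huu] at hu'
  have hired : IsReducedWord n vj (i :: t) := by
    have hcol : adjSwap n i * u = vj := by rw [← huu, adjSwap_collapse]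
    have := reduced_cons_of hi ht (by rw [hcol]; omega)
    rwa [hcol] at this
  have e2 : demWord n m' = demWord n (i :: t) :=
    IH (k - 1) (by omega) vj (by omega) m' (i :: t) hm' hired
  funext F
  rw [demWord_cons, demWord_cons, Function.comp_apply, Function.comp_apply, e1, e2,
    demWord_cons, demWord_cons, Function.comp_apply, Function.comp_apply]
  exact demAt_comm hi hj hd _

lemma helper_adj {i : ℕ} (hi : i + 1 < n) (hj : i + 2 < n)
    {k : ℕ}
    (IH : ∀ k' : ℕ, k' < k → ∀ w : Equiv.Perm (Fin n), permLen w = k' →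
      ∀ l m, IsReducedWord n w l → IsReducedWord n w m → demWord n l = demWord n m)
    (w : Equiv.Perm (Fin n)) (hw : permLen w = k) {l' m' : List ℕ}
    (hl' : IsReducedWord n (adjSwap n i * w) l') (hdl : permLen (adjSwap n i * w) + 1 = k)
    (hm' : IsReducedWord n (adjSwap n (i + 1) * w) m')
    (hdm : permLen (adjSwap n (i + 1) * w) + 1 = k) :
    demWord n (i :: l') = demWord n ((i + 1) :: m') := by
  have hdl' : permLen (adjSwap n i * w) + 1 = permLen w := by omega
  have hdm' : permLen (adjSwap n (i + 1) * w) + 1 = permLen w := by omega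
  have ai := descent_order hi w hdl'
  have aj := descent_order hj w hdm'
  have aij : w⁻¹ (⟨i + 1 + 1, hj⟩ : Fin n) < w⁻¹ ⟨i, Nat.lt_of_succ_lt hi⟩ := aj.trans ai
  set vi := adjSwap n i * w with hvidef
  set vj := adjSwap n (i + 1) * w with hvjdef
  -- left tower
  have dv1 : vi⁻¹ ⟨i + 1 + 1, hj⟩ < vi⁻¹ ⟨i + 1, Nat.lt_of_succ_lt hj⟩ := by
    rw [hvidef, adjSwap_mul_inv]
    simp only [Equiv.Perm.mul_apply]
    have e1 : adjSwap n i (⟨i + 1 + 1, hj⟩ : Fin n) = ⟨i + 1 + 1, hj⟩ :=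
      adjSwap_apply_other' hi (i + 1 + 1) hj (by omega) (by omega)
    have e2 : adjSwap n i (⟨i + 1, Nat.lt_of_succ_lt hj⟩ : Fin n)
        = ⟨i, Nat.lt_of_succ_lt hi⟩ := adjSwap_apply_hi hi
    rw [e1, e2]
    exact aij
  have hu2 := permLen_descent hj vi dv1
  set u2 := adjSwap n (i + 1) * vi with hu2def
  have dv2 : u2⁻¹ ⟨i + 1, hi⟩ < u2⁻¹ ⟨i, Nat.lt_of_succ_lt hi⟩ := by
    have hinv : u2⁻¹ = w⁻¹ * adjSwap n i * adjSwap n (i + 1) := by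
      rw [hu2def, adjSwap_mul_inv, hvidef, adjSwap_mul_inv]
    rw [hinv]
    simp only [Equiv.Perm.mul_apply]
    have e1 : adjSwap n (i + 1) (⟨i + 1, hi⟩ : Fin n) = ⟨i + 1 + 1, hj⟩ := adjSwap_apply_lo hj
    have e2 : adjSwap n i (⟨i + 1 + 1, hj⟩ : Fin n) = ⟨i + 1 + 1, hj⟩ :=
      adjSwap_apply_other' hi (i + 1 + 1) hj (by omega) (by omega)
    have e3 : adjSwap n (i + 1) (⟨i, Nat.lt_of_succ_lt hi⟩ : Fin n)
        = ⟨i, Nat.lt_of_succ_lt hi⟩ :=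
      adjSwap_apply_other' hj i (Nat.lt_of_succ_lt hi) (by omega) (by omega)
    have e4 : adjSwap n i (⟨i, Nat.lt_of_succ_lt hi⟩ : Fin n) = ⟨i + 1, hi⟩ :=
      adjSwap_apply_lo hi
    rw [e1, e2, e3, e4]
    exact aj
  have hu3 := permLen_descent hi u2 dv2
  set u := adjSwap n i * u2 with hudef
  obtain ⟨t, ht⟩ := exists_reduced_word u
  have r1 : IsReducedWord n u2 (i :: t) := by
    have hcol : adjSwap n i * u = u2 := by rw [hudef, adjSwap_collapse]
    have := reduced_cons_of hi ht (by rw [hcol]; omega)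
    rwa [hcol] at this
  have r2 : IsReducedWord n vi ((i + 1) :: i :: t) := by
    have hcol : adjSwap n (i + 1) * u2 = vi := by rw [hu2def, adjSwap_collapse]
    have := reduced_cons_of hj r1 (by rw [hcol]; omega)
    rwa [hcol] at this
  have e1 : demWord n l' = demWord n ((i + 1) :: i :: t) :=
    IH (k - 1) (by omega) vi (by omega) l' _ hl' r2
  -- right tower
  have dv1' : vj⁻¹ ⟨i + 1, hi⟩ < vj⁻¹ ⟨i, Nat.lt_of_succ_lt hi⟩ := by
    rw [hvjdef, adjSwap_mul_inv]
    simp only [Equiv.Perm.mul_apply]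
    have e1' : adjSwap n (i + 1) (⟨i + 1, hi⟩ : Fin n) = ⟨i + 1 + 1, hj⟩ := adjSwap_apply_lo hj
    have e2' : adjSwap n (i + 1) (⟨i, Nat.lt_of_succ_lt hi⟩ : Fin n)
        = ⟨i, Nat.lt_of_succ_lt hi⟩ :=
      adjSwap_apply_other' hj i (Nat.lt_of_succ_lt hi) (by omega) (by omega)
    rw [e1', e2']
    exact aij
  have hu2' := permLen_descent hi vj dv1'
  set u2' := adjSwap n i * vj with hu2'def
  have dv2' : u2'⁻¹ ⟨i + 1 + 1, hj⟩ < u2'⁻¹ ⟨i + 1, Nat.lt_of_succ_lt hj⟩ := by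
    have hinv : u2'⁻¹ = w⁻¹ * adjSwap n (i + 1) * adjSwap n i := by
      rw [hu2'def, adjSwap_mul_inv, hvjdef, adjSwap_mul_inv]
    rw [hinv]
    simp only [Equiv.Perm.mul_apply]
    have f1 : adjSwap n i (⟨i + 1 + 1, hj⟩ : Fin n) = ⟨i + 1 + 1, hj⟩ :=
      adjSwap_apply_other' hi (i + 1 + 1) hj (by omega) (by omega)
    have f2 : adjSwap n (i + 1) (⟨i + 1 + 1, hj⟩ : Fin n) = ⟨i + 1, Nat.lt_of_succ_lt hj⟩ :=
      adjSwap_apply_hi hj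
    have f3 : adjSwap n i (⟨i + 1, Nat.lt_of_succ_lt hj⟩ : Fin n)
        = ⟨i, Nat.lt_of_succ_lt hi⟩ := adjSwap_apply_hi hi
    have f4 : adjSwap n (i + 1) (⟨i, Nat.lt_of_succ_lt hi⟩ : Fin n)
        = ⟨i, Nat.lt_of_succ_lt hi⟩ :=
      adjSwap_apply_other' hj i (Nat.lt_of_succ_lt hi) (by omega) (by omega)
    rw [f1, f2, f3, f4]
    exact ai
  have hu3' := permLen_descent hj u2' dv2'
  set u' := adjSwap n (i + 1) * u2' with hu'def
  have huu : u' = u := by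
    rw [hu'def, hu2'def, hvjdef, hudef, hu2def, hvidef]
    simp only [← mul_assoc]
    rw [← adjSwap_braid hi hj]
  rw [huu] at hu3'
  have r1' : IsReducedWord n u2' ((i + 1) :: t) := by
    have hcol : adjSwap n (i + 1) * u = u2' := by rw [← huu, hu'def, adjSwap_collapse]
    have := reduced_cons_of hj ht (by rw [hcol]; omega)
    rwa [hcol] at this
  have r2' : IsReducedWord n vj (i :: (i + 1) :: t) := by
    have hcol : adjSwap n i * u2' = vj := by rw [hu2'def, adjSwap_collapse]
    have := reduced_cons_of hi r1' (by rw [hcol]; omega)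
    rwa [hcol] at this
  have e2 : demWord n m' = demWord n (i :: (i + 1) :: t) :=
    IH (k - 1) (by omega) vj (by omega) m' _ hm' r2'
  funext F
  rw [demWord_cons, demWord_cons, Function.comp_apply, Function.comp_apply, e1, e2]
  show demAt n i (demAt n (i + 1) (demAt n i (demWord n t F)))
      = demAt n (i + 1) (demAt n i (demAt n (i + 1) (demWord n t F)))
  exact demAt_braid hi hj _

theorem demWord_wd : ∀ k : ℕ, ∀ w : Equiv.Perm (Fin n), permLen w = k →
    ∀ l m, IsReducedWord n w l → IsReducedWord n w m → demWord n l = demWord n m := by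
  intro k
  induction k using Nat.strong_induction_on with
  | _ k IH =>
    intro w hw l m hl hm
    cases l with
    | nil =>
        cases m with
        | nil => rfl
        | cons j m' =>
            exfalso
            have h1 := hl.2.2
            have h2 := hm.2.2
            simp only [List.length_nil, List.length_cons] at h1 h2
            omega
    | cons i l' =>
        cases m with
        | nil =>
            exfalso
            have h1 := hl.2.2
            have h2 := hm.2.2
            simp only [List.length_nil, List.length_cons] at h1 h2
            omega
        | cons j m' =>
            obtain ⟨hi, hl', hdl⟩ := cons_reduced hl
            obtain ⟨hj, hm', hdm⟩ := cons_reduced hm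
            rw [hw] at hdl hdm
            by_cases hij : i = j
            · subst hij
              have e := IH (k - 1) (by omega) (adjSwap n i * w) (by omega) l' m' hl' hm'
              rw [demWord_cons, demWord_cons, e]
            · have hcase : i + 2 ≤ j ∨ j + 2 ≤ i ∨ j = i + 1 ∨ i = j + 1 := by omega
              rcases hcase with hc | hc | hc | hc
              · exact helper_far hi hj (Or.inl hc) IH w hw hl' hdl hm' hdm
              · exact helper_far hi hj (Or.inr hc) IH w hw hl' hdl hm' hdm
              · subst hc
                exact helper_adj hi hj IH w hw hl' hdl hm' hdm
              · subst hc
                exact (helper_adj hj hi IH w hw hm' hdm hl' hdl).symm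

end WordIndependence
section MainAssembly

variable {n : ℕ}

lemma w0_inv : (w0 n)⁻¹ = w0 n := rfl

lemma w0_descent {j : ℕ} (hj : j + 1 < n) :
    (w0 n)⁻¹ ⟨j + 1, hj⟩ < (w0 n)⁻¹ ⟨j, Nat.lt_of_succ_lt hj⟩ := by
  rw [w0_inv]
  show (w0 n) ⟨j + 1, hj⟩ < (w0 n) ⟨j, Nat.lt_of_succ_lt hj⟩
  simp only [w0, Fin.revPerm_apply, Fin.lt_def, Fin.val_rev]
  show n - (j + 1 + 1) < n - (j + 1)
  omega

lemma demWord_w0_invariant (F : MvPolynomial (Fin n) ℚ) {l : List ℕ}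
    (hl : IsReducedWord n (w0 n) l) {j : ℕ} (hj : j + 1 < n) :
    rename (⇑(adjSwap n j)) (demWord n l F) = demWord n l F := by
  have hdesc := permLen_descent hj (w0 n) (w0_descent hj)
  obtain ⟨t, ht⟩ := exists_reduced_word (adjSwap n j * w0 n)
  have hcol : adjSwap n j * (adjSwap n j * w0 n) = w0 n := adjSwap_collapse _ _
  have hred2 : IsReducedWord n (w0 n) (j :: t) := by
    have := reduced_cons_of hj ht (by rw [hcol]; omega)
    rwa [hcol] at this
  have he := demWord_wd (permLen (w0 n)) (w0 n) rfl l (j :: t) hl hred2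
  rw [he, demWord_cons, Function.comp_apply, demAt_eq hj, adjSwap_eq j hj]
  exact rename_swap_demazure (fin_mk_ne _ _ (by omega)) _

lemma rename_prod_invariant (g : MvPolynomial (Fin n) ℚ)
    (hg : ∀ j : ℕ, j + 1 < n → rename (⇑(adjSwap n j)) g = g) :
    ∀ lw : List ℕ, (∀ x ∈ lw, x + 1 < n) → rename (⇑((lw.map (adjSwap n)).prod)) g = g := by
  intro lw
  induction lw with
  | nil =>
      intro _
      simp only [List.map_nil, List.prod_nil]
      rw [Equiv.Perm.coe_one, rename_id, AlgHom.id_apply]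
  | cons x lw ih =>
      intro hr
      rw [List.map_cons, List.prod_cons, Equiv.Perm.coe_mul, ← rename_rename,
        ih (fun y hy => hr y (List.mem_cons_of_mem x hy))]
      exact hg x (hr x List.mem_cons_self)

end MainAssembly

/-- For the longest element `w₀`, the polynomial `∂_{w₀} F` is symmetric, i.e. invariant
under every permutation of the variables. -/
theorem demazure_w0_symmetric (n : ℕ) (hn : 1 ≤ n) (F : MvPolynomial (Fin n) ℚ) :
    (demazureOf n (w0 n) F).IsSymmetric := by
  have hex : ∃ l, IsReducedWord n (w0 n) l := exists_reduced_word (w0 n)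
  rw [demazureOf, dif_pos hex]
  intro e
  obtain ⟨le, hle⟩ := exists_reduced_word e
  have hinv := rename_prod_invariant (demWord n hex.choose F)
    (fun j hj => demWord_w0_invariant F hex.choose_spec hj) le hle.1
  rw [hle.2.1] at hinv
  exact hinv
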